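/- Let S be a ℤ^k-graded ring with grading 𝒜 : (Fin k → ℤ) → AddSubgroup S, and let R = S_+ be its positive subring, the subring generated by (equal to the direct sum of) the components 𝒜 v with v ∈ ℕ^k (all coordinates non-negative). Suppose that for every non-zero v ∈ Fin k → ℕ and every non-zero x ∈ 𝒜 v there exists y ∈ 𝒜 (−v) with x * y ≠ 0. Let A be a right ideal of R whose right annihilator in R, A^r = { t ∈ R | ∀ a ∈ A, a * t = 0 }, is non-trivial. Then A^r contains a non-zero element h of degree 0, i.e. h ∈ 𝒜 0, h ≠ 0, and a * h = 0 for all a ∈ A. -/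

import Mathlib

/-- `s` belongs to the positive subring `S₊` of the `ℤ^k`-graded ring `S`: all of its
non-zero homogeneous components have degree in `ℕ^k` (all coordinates non-negative). -/
def MemPositiveSubring {k : ℕ} {S : Type*} [Ring S]
    (𝒜 : (Fin k → ℤ) → AddSubgroup S) [GradedRing 𝒜] (s : S) : Prop :=
  ∀ v : Fin k → ℤ, (DirectSum.decompose 𝒜 s v : S) ≠ 0 → ∀ i : Fin k, 0 ≤ v i

section Aux

variable {k : ℕ} {S : Type*} [Ring S] (𝒜 : (Fin k → ℤ) → AddSubgroup S) [GradedRing 𝒜]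

lemma mem_pos_of_homogeneous {x : S} {v : Fin k → ℤ} (hx : x ∈ 𝒜 v)
    (hv : ∀ i, 0 ≤ v i) : MemPositiveSubring 𝒜 x := by
  intro w hw i
  by_cases h : v = w
  · exact h ▸ hv i
  · exact absurd (DirectSum.decompose_of_mem_ne 𝒜 hx h) hw

lemma pos_mul {s t : S} (hs : MemPositiveSubring 𝒜 s) (ht : MemPositiveSubring 𝒜 t) :
    MemPositiveSubring 𝒜 (s * t) := by
  classical
  intro w hw i
  rw [DirectSum.decompose_mul, DirectSum.coe_mul_apply] at hw
  obtain ⟨ij, hij, hne⟩ := Finset.exists_ne_zero_of_sum_ne_zero hw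
  rw [Finset.mem_filter, Finset.mem_product] at hij
  have h1 : (DirectSum.decompose 𝒜 s ij.1 : S) ≠ 0 := fun h => hne (by rw [h, zero_mul])
  have h2 : (DirectSum.decompose 𝒜 t ij.2 : S) ≠ 0 := fun h => hne (by rw [h, mul_zero])
  calc (0:ℤ) ≤ ij.1 i + ij.2 i := add_nonneg (hs _ h1 i) (ht _ h2 i)
  _ = w i := by rw [← hij.2]; rfl

lemma comp_of_hom_mul {x : S} {u : Fin k → ℤ} (hx : x ∈ 𝒜 u) (t : S) (z : Fin k → ℤ) :
    (DirectSum.decompose 𝒜 (x * t) z : S) = x * (DirectSum.decompose 𝒜 t (z - u) : S) := by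
  have h := DirectSum.coe_decompose_mul_add_of_left_mem (𝒜 := 𝒜) (j := z - u) (b := t) hx
  have h2 : u + (z - u) = z := by abel
  rwa [h2] at h

end Aux

set_option maxHeartbeats 1000000 in
set_option synthInstance.maxHeartbeats 400000 in
/-- Let `R = S₊` be the positive subring of a `ℤ^k`-graded ring `S` such that for every
non-zero `v ∈ ℕ^k` and non-zero `x ∈ 𝒜 v` there is `y ∈ 𝒜 (-v)` with `x * y ≠ 0`.
If a right ideal `A` of `R` has non-trivial right annihilator in `R`, then that
annihilator contains a non-zero element of degree `0`. -/
theorem exists_degree_zero_annihilator_of_positive_subring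
    {k : ℕ} {S : Type*} [Ring S]
    (𝒜 : (Fin k → ℤ) → AddSubgroup S) [GradedRing 𝒜]
    (hS : ∀ v : Fin k → ℕ, v ≠ 0 → ∀ x ∈ 𝒜 (fun i => (v i : ℤ)), x ≠ 0 →
      ∃ y ∈ 𝒜 (-(fun i => (v i : ℤ))), x * y ≠ 0)
    (A : AddSubgroup S) (hAsub : ∀ a ∈ A, MemPositiveSubring 𝒜 a)
    (hA : ∀ a ∈ A, ∀ t : S, MemPositiveSubring 𝒜 t → a * t ∈ A)
    (hann : ∃ t : S, MemPositiveSubring 𝒜 t ∧ t ≠ 0 ∧ ∀ a ∈ A, a * t = 0) :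
    ∃ h ∈ 𝒜 (0 : Fin k → ℤ), h ≠ 0 ∧ ∀ a ∈ A, a * h = 0 := by
  classical
  haveI : WellFoundedLT (Fin k) := inferInstance
  letI L : LinearOrder (Lex (Fin k → ℤ)) := inferInstance
  obtain ⟨t₀, ht₀P, ht₀ne, ht₀ann⟩ := hann
  set T : S → Prop := fun t => MemPositiveSubring 𝒜 t ∧ t ≠ 0 ∧ ∀ a ∈ A, a * t = 0 with hTdef
  have hC : {c : ℕ | ∃ t, T t ∧ (DirectSum.decompose 𝒜 t).support.card = c}.Nonempty :=
    ⟨_, t₀, ⟨ht₀P, ht₀ne, ht₀ann⟩, rfl⟩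
  obtain ⟨t, hTt, hcard⟩ := Nat.sInf_mem hC
  obtain ⟨htP, htne, htann⟩ := hTt
  have hmin : ∀ t' : S, T t' →
      (DirectSum.decompose 𝒜 t).support.card ≤ (DirectSum.decompose 𝒜 t').support.card := by
    intro t' ht'
    rw [hcard]
    exact Nat.sInf_le ⟨t', ht', rfl⟩
  have htsupp : (DirectSum.decompose 𝒜 t).support.Nonempty := by
    rw [Finset.nonempty_iff_ne_empty]
    intro h
    apply htne
    have h0 : DirectSum.decompose 𝒜 t = 0 := DFinsupp.support_eq_empty.mp h
    simpa using congrArg (DirectSum.decompose 𝒜).symm h0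
  -- Lemma B : if a homogeneous positive x kills one nonzero component of t, it kills t
  have lemB : ∀ (u : Fin k → ℤ), (∀ i, 0 ≤ u i) → ∀ x ∈ 𝒜 u, ∀ v : Fin k → ℤ,
      (DirectSum.decompose 𝒜 t v : S) ≠ 0 → x * (DirectSum.decompose 𝒜 t v : S) = 0 →
      x * t = 0 := by
    intro u hu x hx v hv hxv
    by_contra hne
    have hxP := mem_pos_of_homogeneous 𝒜 hx hu
    have hT' : T (x * t) := ⟨pos_mul 𝒜 hxP htP, hne, fun a ha => by
      rw [← mul_assoc]; exact htann _ (hA a ha x hxP)⟩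
    have hvmem : v ∈ (DirectSum.decompose 𝒜 t).support :=
      DFinsupp.mem_support_iff.mpr (fun h => hv (by rw [h, ZeroMemClass.coe_zero]))
    have hsub : (DirectSum.decompose 𝒜 (x * t)).support ⊆
        ((DirectSum.decompose 𝒜 t).support.image (fun w => u + w)).erase (u + v) := by
      intro z hz
      have hz' : (DirectSum.decompose 𝒜 (x * t) z : S) ≠ 0 :=
        fun h => DFinsupp.mem_support_iff.mp hz (ZeroMemClass.coe_eq_zero.mp h)
      rw [comp_of_hom_mul 𝒜 hx] at hz'
      have htz : (DirectSum.decompose 𝒜 t (z - u) : S) ≠ 0 :=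
        fun h => hz' (by rw [h, mul_zero])
      have hzmem : z - u ∈ (DirectSum.decompose 𝒜 t).support :=
        DFinsupp.mem_support_iff.mpr (fun h => htz (by rw [h, ZeroMemClass.coe_zero]))
      refine Finset.mem_erase.mpr ⟨?_, Finset.mem_image.mpr ⟨z - u, hzmem, by abel⟩⟩
      intro hzeq
      apply hz'
      have : z - u = v := by rw [hzeq]; abel
      rw [this]; exact hxv
    have h1 : (DirectSum.decompose 𝒜 (x * t)).support.card <
        (DirectSum.decompose 𝒜 t).support.card := by
      calc (DirectSum.decompose 𝒜 (x * t)).support.card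
          ≤ (((DirectSum.decompose 𝒜 t).support.image (fun w => u + w)).erase (u + v)).card :=
            Finset.card_le_card hsub
        _ < ((DirectSum.decompose 𝒜 t).support.image (fun w => u + w)).card :=
            Finset.card_erase_lt_of_mem (Finset.mem_image.mpr ⟨v, hvmem, rfl⟩)
        _ ≤ (DirectSum.decompose 𝒜 t).support.card := Finset.card_image_le
    exact absurd (hmin _ hT') (not_le.mpr h1)
  -- Lemma C : components of a positive annihilator-element kill components of t
  have lemC : ∀ N (s : S), (DirectSum.decompose 𝒜 s).support.card ≤ N →
      MemPositiveSubring 𝒜 s → s * t = 0 →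
      ∀ u w, (DirectSum.decompose 𝒜 s u : S) * (DirectSum.decompose 𝒜 t w : S) = 0 := by
    intro N
    induction N with
    | zero =>
      intro s hc _ _ u w
      have he : (DirectSum.decompose 𝒜 s).support = ∅ :=
        Finset.card_eq_zero.mp (Nat.le_zero.mp hc)
      have hu : DirectSum.decompose 𝒜 s u = 0 :=
        DFinsupp.notMem_support_iff.mp (by simp [he])
      rw [hu, ZeroMemClass.coe_zero, zero_mul]
    | succ N ih =>
      intro s hc hsP hst u w
      rcases Finset.eq_empty_or_nonempty (DirectSum.decompose 𝒜 s).support with he | hnesupp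
      · have hu : DirectSum.decompose 𝒜 s u = 0 :=
          DFinsupp.notMem_support_iff.mp (by simp [he])
        rw [hu, ZeroMemClass.coe_zero, zero_mul]
      · obtain ⟨x, hxmem, hxmax⟩ :=
          Finset.exists_max_image _ (fun u : Fin k → ℤ => toLex u) hnesupp
        obtain ⟨v, hvmem, hvmax⟩ :=
          Finset.exists_max_image _ (fun u : Fin k → ℤ => toLex u) htsupp
        set sx : S := (DirectSum.decompose 𝒜 s x : S) with hsxdef
        have hsxmem : sx ∈ 𝒜 x := SetLike.coe_mem _
        have hsxne : sx ≠ 0 :=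
          fun h => DFinsupp.mem_support_iff.mp hxmem (ZeroMemClass.coe_eq_zero.mp h)
        have htvne : (DirectSum.decompose 𝒜 t v : S) ≠ 0 :=
          fun h => DFinsupp.mem_support_iff.mp hvmem (ZeroMemClass.coe_eq_zero.mp h)
        -- top component of s * t
        have htop : sx * (DirectSum.decompose 𝒜 t v : S) = 0 := by
          have h0 : (DirectSum.decompose 𝒜 (s * t) (x + v) : S) = 0 := by
            rw [hst]; simp
          rw [DirectSum.decompose_mul, DirectSum.coe_mul_apply] at h0
          have hsingle :
              (∑ ij ∈ ((DirectSum.decompose 𝒜 s).support ×ˢ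
                  (DirectSum.decompose 𝒜 t).support).filter
                  (fun ij : (Fin k → ℤ) × (Fin k → ℤ) => ij.1 + ij.2 = x + v),
                ((DirectSum.decompose 𝒜 s ij.1 : S) * (DirectSum.decompose 𝒜 t ij.2 : S)))
                = sx * (DirectSum.decompose 𝒜 t v : S) := by
            refine Finset.sum_eq_single_of_mem (x, v) ?_ ?_
            · rw [Finset.mem_filter, Finset.mem_product]; exact ⟨⟨hxmem, hvmem⟩, rfl⟩
            · intro ij hij hne
              rw [Finset.mem_filter, Finset.mem_product] at hij
              exfalso
              have ha : toLex ij.1 ≤ toLex x := hxmax _ hij.1.1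
              have hb : toLex ij.2 ≤ toLex v := hvmax _ hij.1.2
              have hsum : toLex ij.1 + toLex ij.2 = toLex x + toLex v := by
                rw [← toLex_add, ← toLex_add, hij.2]
              have h1' : toLex ij.1 = toLex x := by
                by_contra hne2
                exact absurd hsum (ne_of_lt
                  (add_lt_add_of_lt_of_le (lt_of_le_of_ne ha hne2) hb))
              have h2' : toLex ij.2 = toLex v := by
                rw [h1'] at hsum
                exact add_left_cancel hsum
              exact hne (Prod.ext (toLex.injective h1') (toLex.injective h2'))
          rw [hsingle] at h0
          exact h0
        have hsxt : sx * t = 0 := lemB x (hsP x hsxne) sx hsxmem v htvne htop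
        have hsxall : ∀ w', sx * (DirectSum.decompose 𝒜 t w' : S) = 0 := by
          intro w'
          have h2 := comp_of_hom_mul 𝒜 hsxmem t (x + w')
          have heq : x + w' - x = w' := by abel
          rw [hsxt, heq] at h2
          simpa using h2.symm
        -- the remainder s - sx
        have hcomp : ∀ u', (DirectSum.decompose 𝒜 (s - sx) u' : S) =
            if u' = x then 0 else (DirectSum.decompose 𝒜 s u' : S) := by
          intro u'
          have hd : (DirectSum.decompose 𝒜 (s - sx) u' : S) =
              (DirectSum.decompose 𝒜 s u' : S) - (DirectSum.decompose 𝒜 sx u' : S) := by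
            rw [DirectSum.decompose_sub, DirectSum.sub_apply, AddSubgroupClass.coe_sub]
          by_cases h : u' = x
          · subst h
            rw [hd, DirectSum.decompose_of_mem_same 𝒜 hsxmem, if_pos rfl, sub_self]
          · rw [hd, DirectSum.decompose_of_mem_ne 𝒜 hsxmem (Ne.symm h), sub_zero, if_neg h]
        have hsubsupp : (DirectSum.decompose 𝒜 (s - sx)).support ⊆
            (DirectSum.decompose 𝒜 s).support.erase x := by
          intro z hz
          have hz' : (DirectSum.decompose 𝒜 (s - sx) z : S) ≠ 0 :=
            fun h => DFinsupp.mem_support_iff.mp hz (ZeroMemClass.coe_eq_zero.mp h)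
          rw [hcomp z] at hz'
          by_cases h : z = x
          · rw [if_pos h] at hz'; exact absurd rfl hz'
          · rw [if_neg h] at hz'
            exact Finset.mem_erase.mpr ⟨h,
              DFinsupp.mem_support_iff.mpr (fun hh => hz' (by rw [hh, ZeroMemClass.coe_zero]))⟩
        have hcard' : (DirectSum.decompose 𝒜 (s - sx)).support.card ≤ N := by
          have := Finset.card_le_card hsubsupp
          rw [Finset.card_erase_of_mem hxmem] at this
          omega
        have hP' : MemPositiveSubring 𝒜 (s - sx) := by
          intro u' hu' i
          rw [hcomp u'] at hu'
          by_cases h : u' = x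
          · rw [if_pos h] at hu'; exact absurd rfl hu'
          · rw [if_neg h] at hu'; exact hsP u' hu' i
        have hmul' : (s - sx) * t = 0 := by rw [sub_mul, hst, hsxt, sub_zero]
        have ihres := ih (s - sx) hcard' hP' hmul'
        by_cases h : u = x
        · rw [h]; exact hsxall w
        · have := ihres u w
          rw [hcomp u, if_neg h] at this
          exact this
  -- every element of A kills every component of t
  have hkill : ∀ a ∈ A, ∀ w, a * (DirectSum.decompose 𝒜 t w : S) = 0 := by
    intro a ha w
    conv_lhs => rw [← DirectSum.sum_support_decompose 𝒜 a]
    rw [Finset.sum_mul]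
    exact Finset.sum_eq_zero fun u _ =>
      lemC _ a le_rfl (hAsub a ha) (htann a ha) u w
  -- conclude
  obtain ⟨v, hv⟩ := htsupp
  have htv : (DirectSum.decompose 𝒜 t v : S) ≠ 0 :=
    fun h => DFinsupp.mem_support_iff.mp hv (ZeroMemClass.coe_eq_zero.mp h)
  have hvpos : ∀ i, 0 ≤ v i := htP v htv
  by_cases hv0 : v = 0
  · exact ⟨_, hv0 ▸ SetLike.coe_mem (DirectSum.decompose 𝒜 t v), htv,
      fun a ha => hkill a ha v⟩
  · set v' : Fin k → ℕ := fun i => (v i).toNat with hv'def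
    have hcast : (fun i => (v' i : ℤ)) = v := funext fun i => Int.toNat_of_nonneg (hvpos i)
    have hv'ne : v' ≠ 0 := by
      intro h
      apply hv0
      rw [← hcast, h]
      funext i; simp
    have hmem' : (DirectSum.decompose 𝒜 t v : S) ∈ 𝒜 (fun i => (v' i : ℤ)) := by
      rw [hcast]; exact SetLike.coe_mem _
    obtain ⟨y, hy, hprodne⟩ := hS v' hv'ne _ hmem' htv
    rw [hcast] at hy
    refine ⟨(DirectSum.decompose 𝒜 t v : S) * y, ?_, hprodne, fun a ha => ?_⟩
    · have hm := SetLike.mul_mem_graded (SetLike.coe_mem (DirectSum.decompose 𝒜 t v)) hy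
      have hvv : v + -v = 0 := by abel
      rwa [hvv] at hm
    · rw [← mul_assoc, hkill a ha v, zero_mul]
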